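/- For s ∈ (1/2, 1], the function F_s(t) = θ(t)|t|^s, where θ(t) = (3/8)|t|^{1/2}(t² - (10/3)|t| + 5) for |t| ≤ 1 and θ(t) = 1 for |t| > 1, is continuously differentiable on ℝ, and F'_s is bounded and uniformly continuous on ℝ. -/

import Mathlib

open Filter Topology Set

noncomputable def theta (t : ℝ) : ℝ :=
  if |t| ≤ 1 then (3/8) * |t| ^ ((1:ℝ)/2) * (t^2 - (10/3) * |t| + 5) else 1

noncomputable def Fs (s t : ℝ) : ℝ := theta t * |t| ^ s

noncomputable def dphi (s r : ℝ) : ℝ :=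
  if r ≤ 1 then
    (3/8) * ((s+5/2) * r ^ (s+3/2) - (10/3)*(s+3/2) * r ^ (s+1/2) + 5*(s+1/2) * r ^ (s-1/2))
  else s * (max r 1) ^ (s-1)

noncomputable def Dd (s t : ℝ) : ℝ := if 0 ≤ t then dphi s t else - dphi s (-t)

lemma fs_even (s x : ℝ) : Fs s (-x) = Fs s x := by
  simp [Fs, theta, abs_neg, neg_sq]

lemma fs_eq_pos (s : ℝ) {x : ℝ} (hx : 0 < x) (hx1 : x ≤ 1) :
    Fs s x = (3/8) * x^(s+1/2) * (x^2 - (10/3)*x + 5) := by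
  have hax : |x| = x := abs_of_pos hx
  rw [Fs, theta, hax, if_pos hx1, Real.rpow_add hx s (1/2)]
  ring

lemma fs_eq_top (s : ℝ) {x : ℝ} (hx : 1 < x) : Fs s x = x ^ s := by
  have hax : |x| = x := abs_of_pos (lt_trans one_pos hx)
  rw [Fs, theta, hax, if_neg (not_le.mpr hx), one_mul]

lemma dphi_zero (s : ℝ) (hs : 1/2 < s) : dphi s 0 = 0 := by
  rw [dphi, if_pos (by norm_num)]
  rw [Real.zero_rpow (by linarith), Real.zero_rpow (by linarith), Real.zero_rpow (by linarith)]
  ring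

lemma poly_hasDeriv (u : ℝ) :
    HasDerivAt (fun x : ℝ => x^2 - (10/3)*x + 5) (2*u - 10/3) u := by
  have h := (((hasDerivAt_pow 2 u).sub ((hasDerivAt_id u).const_mul (10/3))).add_const 5)
  simpa using h

lemma g1_hasDeriv (s : ℝ) {u : ℝ} (hu : 0 < u) :
    HasDerivAt (fun x : ℝ => (3/8) * x^(s+1/2) * (x^2 - (10/3)*x + 5))
      ((3/8) * ((s+1/2) * u^(s+1/2-1)) * (u^2 - (10/3)*u + 5)
        + ((3/8) * u^(s+1/2)) * (2*u - 10/3)) u := by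
  exact ((Real.hasDerivAt_rpow_const (Or.inl hu.ne')).const_mul (3/8)).mul (poly_hasDeriv u)

lemma g1_deriv_eq (s : ℝ) {u : ℝ} (hu : 0 < u) :
    (3/8) * ((s+1/2) * u^(s+1/2-1)) * (u^2 - (10/3)*u + 5)
      + ((3/8) * u^(s+1/2)) * (2*u - 10/3)
    = (3/8) * ((s+5/2) * u ^ (s+3/2) - (10/3)*(s+3/2) * u ^ (s+1/2) + 5*(s+1/2) * u ^ (s-1/2)) := by
  have e1 : s + 1/2 - 1 = s - 1/2 := by ring
  have h2 : u ^ (s+3/2) = u ^ (s-1/2) * u^2 := by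
    rw [show s + 3/2 = (s-1/2) + 2 by ring, Real.rpow_add hu, Real.rpow_two]
  have h1 : u ^ (s+1/2) = u ^ (s-1/2) * u := by
    rw [show s + 1/2 = (s-1/2) + 1 by ring, Real.rpow_add hu, Real.rpow_one]
  rw [e1, h2, h1]
  ring

lemma hasDeriv_pos (s : ℝ) (hs : 1/2 < s) {u : ℝ} (hu : 0 < u) :
    HasDerivAt (Fs s) (dphi s u) u := by
  rcases lt_trichotomy u 1 with h1 | h1 | h1
  · -- 0 < u < 1
    have hnhds : Set.Ioo (0:ℝ) 1 ∈ 𝓝 u := isOpen_Ioo.mem_nhds ⟨hu, h1⟩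
    have heq : Fs s =ᶠ[𝓝 u] fun x => (3/8) * x^(s+1/2) * (x^2 - (10/3)*x + 5) := by
      filter_upwards [hnhds] with x hx
      exact fs_eq_pos s hx.1 hx.2.le
    have := (g1_hasDeriv s hu).congr_of_eventuallyEq heq
    rw [g1_deriv_eq s hu] at this
    rwa [dphi, if_pos h1.le]
  · -- u = 1
    subst h1
    have hd1 : dphi s 1 = s := by
      rw [dphi, if_pos le_rfl, Real.one_rpow, Real.one_rpow, Real.one_rpow]
      ring
    rw [hd1]
    have hIic : HasDerivWithinAt (Fs s) s (Set.Iic 1) 1 := by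
      have h := ((g1_hasDeriv s one_pos).hasDerivWithinAt (s := Set.Iic 1))
      have heq : Fs s =ᶠ[𝓝[Set.Iic (1:ℝ)] 1]
          fun x => (3/8) * x^(s+1/2) * (x^2 - (10/3)*x + 5) := by
        filter_upwards [inter_mem_nhdsWithin (Set.Iic 1) (isOpen_Ioi.mem_nhds (by norm_num : (0:ℝ) < 1))] with x hx
        exact fs_eq_pos s hx.2 hx.1
      have h2 := h.congr_of_eventuallyEq heq (by
        rw [fs_eq_pos s one_pos le_rfl])
      refine h2.congr_deriv ?_
      rw [Real.one_rpow, Real.one_rpow]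
      ring
    have hIci : HasDerivWithinAt (Fs s) s (Set.Ici 1) 1 := by
      have h := ((Real.hasDerivAt_rpow_const (p := s) (Or.inl one_ne_zero)).hasDerivWithinAt
        (s := Set.Ici 1))
      have heq : Fs s =ᶠ[𝓝[Set.Ici (1:ℝ)] 1] fun x : ℝ => x ^ s := by
        filter_upwards [self_mem_nhdsWithin] with x hx
        have hx0 : 0 < x := lt_of_lt_of_le one_pos hx
        rcases eq_or_lt_of_le (Set.mem_Ici.mp hx) with h | h
        · rw [← h, fs_eq_pos s one_pos le_rfl, Real.one_rpow, Real.one_rpow]; norm_num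
        · exact fs_eq_top s h
      have h2 := h.congr_of_eventuallyEq heq (by
        rw [fs_eq_pos s one_pos le_rfl, Real.one_rpow, Real.one_rpow]; norm_num)
      refine h2.congr_deriv ?_
      rw [Real.one_rpow]
      ring
    have := hIic.union hIci
    rwa [Set.Iic_union_Ici, hasDerivWithinAt_univ] at this
  · -- 1 < u
    have hnhds : Set.Ioi (1:ℝ) ∈ 𝓝 u := isOpen_Ioi.mem_nhds h1
    have heq : Fs s =ᶠ[𝓝 u] fun x : ℝ => x ^ s := by
      filter_upwards [hnhds] with x hx
      exact fs_eq_top s hx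
    have := (Real.hasDerivAt_rpow_const (p := s)
      (Or.inl (ne_of_gt (lt_trans one_pos h1)))).congr_of_eventuallyEq heq
    rwa [dphi, if_neg (not_le.mpr h1), max_eq_left h1.le]

lemma fs_zero (s : ℝ) (hs : 1/2 < s) : Fs s 0 = 0 := by
  rw [Fs, abs_zero, Real.zero_rpow (by linarith : s ≠ 0), mul_zero]

lemma theta_abs_le {y : ℝ} (hy : |y| ≤ 1) : |theta y| ≤ 4 * |y| ^ ((1:ℝ)/2) := by
  rw [theta, if_pos hy]
  have h0 : (0:ℝ) ≤ |y| ^ ((1:ℝ)/2) := Real.rpow_nonneg (abs_nonneg y) _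
  have hy2 : y^2 ≤ 1 := by
    have := abs_nonneg y
    nlinarith [sq_abs y]
  have hP : |y^2 - (10/3) * |y| + 5| ≤ 32/3 := by
    rw [abs_le]
    constructor <;> nlinarith [sq_nonneg y, abs_nonneg y]
  calc |(3/8) * |y| ^ ((1:ℝ)/2) * (y^2 - (10/3) * |y| + 5)|
      = (3/8) * |y| ^ ((1:ℝ)/2) * |y^2 - (10/3) * |y| + 5| := by
        rw [abs_mul, abs_mul]
        rw [abs_of_nonneg (by norm_num : (0:ℝ) ≤ 3/8), abs_of_nonneg h0]
    _ ≤ (3/8) * |y| ^ ((1:ℝ)/2) * (32/3) := by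
        apply mul_le_mul_of_nonneg_left hP (by positivity)
    _ = 4 * |y| ^ ((1:ℝ)/2) := by ring

lemma hasDeriv_zero (s : ℝ) (hs : 1/2 < s) : HasDerivAt (Fs s) 0 0 := by
  rw [hasDerivAt_iff_tendsto_slope]
  apply squeeze_zero_norm' (a := fun y : ℝ => 4 * |y| ^ (s - 1/2))
  · have hmem : {y : ℝ | |y| < 1} ∈ 𝓝[≠] (0:ℝ) := by
      apply mem_nhdsWithin_of_mem_nhds
      have : {y : ℝ | |y| < 1} = Set.Ioo (-1) 1 := by
        ext y; simp [abs_lt]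
      rw [this]
      exact isOpen_Ioo.mem_nhds (by norm_num)
    filter_upwards [hmem, self_mem_nhdsWithin] with y hy hy0
    have hy0' : y ≠ 0 := hy0
    have hay : 0 < |y| := abs_pos.mpr hy0'
    rw [slope_def_field, fs_zero s hs]
    have hFs : |Fs s y| ≤ 4 * |y| ^ ((1:ℝ)/2 + s) := by
      rw [Fs, abs_mul, abs_of_nonneg (Real.rpow_nonneg (abs_nonneg y) s)]
      calc |theta y| * |y| ^ s ≤ (4 * |y| ^ ((1:ℝ)/2)) * |y| ^ s := by
            apply mul_le_mul_of_nonneg_right (theta_abs_le hy.le)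
              (Real.rpow_nonneg (abs_nonneg y) s)
        _ = 4 * |y| ^ ((1:ℝ)/2 + s) := by rw [Real.rpow_add hay]; ring
    have : ‖(Fs s y - 0) / (y - 0)‖ = |Fs s y| / |y| := by
      rw [sub_zero, sub_zero, Real.norm_eq_abs, abs_div]
    rw [this]
    rw [div_le_iff₀ hay]
    calc |Fs s y| ≤ 4 * |y| ^ ((1:ℝ)/2 + s) := hFs
      _ = 4 * |y| ^ (s - 1/2) * |y| := by
          rw [show (1:ℝ)/2 + s = (s - 1/2) + 1 by ring, Real.rpow_add hay, Real.rpow_one]; ring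
  · have hc : ContinuousAt (fun y : ℝ => 4 * |y| ^ (s - 1/2)) 0 := by
      exact continuousAt_const.mul
        (ContinuousAt.rpow_const (continuous_abs.continuousAt (x := (0:ℝ)))
          (Or.inr (by linarith)))
    have h2 : Tendsto (fun y : ℝ => 4 * |y| ^ (s - 1/2)) (𝓝[≠] (0:ℝ))
        (𝓝 (4 * |(0:ℝ)| ^ (s - 1/2))) := hc.tendsto.mono_left nhdsWithin_le_nhds
    have h3 : (4:ℝ) * |(0:ℝ)| ^ (s - 1/2) = 0 := by
      rw [abs_zero, Real.zero_rpow (by linarith : s - 1/2 ≠ 0), mul_zero]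
    rwa [h3] at h2

lemma hasDeriv_all (s : ℝ) (hs : 1/2 < s) (t : ℝ) : HasDerivAt (Fs s) (Dd s t) t := by
  rcases lt_trichotomy t 0 with ht | ht | ht
  · have hu : 0 < -t := by linarith
    have h := hasDeriv_pos s hs hu
    have hneg' := HasDerivAt.comp t h (hasDerivAt_neg t)
    have hneg : HasDerivAt (fun x : ℝ => Fs s (-x)) (dphi s (-t) * (-1)) t := by
      simpa [Function.comp_def] using hneg'
    have : (fun x : ℝ => Fs s (-x)) = Fs s := funext fun x => fs_even s x
    rw [this] at hneg
    rw [Dd, if_neg (not_le.mpr ht)]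
    convert hneg using 1
    ring
  · subst ht
    rw [Dd, if_pos le_rfl, dphi_zero s hs]
    exact hasDeriv_zero s hs
  · rw [Dd, if_pos ht.le]
    exact hasDeriv_pos s hs ht

lemma dphi_cont (s : ℝ) (hs : 1/2 < s) : Continuous (dphi s) := by
  unfold dphi
  apply Continuous.if_le
  · apply Continuous.mul continuous_const
    apply Continuous.add
    apply Continuous.sub
    · apply Continuous.mul continuous_const
      exact continuous_iff_continuousAt.mpr fun x =>
        Real.continuousAt_rpow_const x _ (Or.inr (by linarith))
    · apply Continuous.mul continuous_const
      exact continuous_iff_continuousAt.mpr fun x =>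
        Real.continuousAt_rpow_const x _ (Or.inr (by linarith))
    · apply Continuous.mul continuous_const
      exact continuous_iff_continuousAt.mpr fun x =>
        Real.continuousAt_rpow_const x _ (Or.inr (by linarith))
  · apply Continuous.mul continuous_const
    apply continuous_iff_continuousAt.mpr
    intro x
    exact ContinuousAt.rpow_const (continuous_id.max continuous_const).continuousAt
      (Or.inl (by positivity))
  · exact continuous_id
  · exact continuous_const
  · intro r hr
    rw [hr, Real.one_rpow, Real.one_rpow, Real.one_rpow, max_self, Real.one_rpow]
    ring

lemma Dd_cont (s : ℝ) (hs : 1/2 < s) : Continuous (Dd s) := by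
  unfold Dd
  apply Continuous.if_le
  · exact dphi_cont s hs
  · exact ((dphi_cont s hs).comp continuous_neg).neg
  · exact continuous_const
  · exact continuous_id
  · intro t ht
    rw [← ht]
    simp [dphi_zero s hs]

lemma dphi_bound (s : ℝ) (hs : 1/2 < s) (hs1 : s ≤ 1) {r : ℝ} (hr : 0 ≤ r) :
    |dphi s r| ≤ 8 := by
  rw [dphi]
  split_ifs with h
  · have hX : 0 ≤ r ^ (s+3/2) ∧ r ^ (s+3/2) ≤ 1 :=
      ⟨Real.rpow_nonneg hr _, Real.rpow_le_one hr h (by linarith)⟩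
    have hY : 0 ≤ r ^ (s+1/2) ∧ r ^ (s+1/2) ≤ 1 :=
      ⟨Real.rpow_nonneg hr _, Real.rpow_le_one hr h (by linarith)⟩
    have hZ : 0 ≤ r ^ (s-1/2) ∧ r ^ (s-1/2) ≤ 1 :=
      ⟨Real.rpow_nonneg hr _, Real.rpow_le_one hr h (by linarith)⟩
    rw [abs_le]
    constructor <;> nlinarith [hX.1, hX.2, hY.1, hY.2, hZ.1, hZ.2]
  · push_neg at h
    rw [max_eq_left h.le]
    have h1 : r ^ (s-1) ≤ 1 :=
      Real.rpow_le_one_of_one_le_of_nonpos h.le (by linarith)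
    have h0 : 0 ≤ r ^ (s-1) := Real.rpow_nonneg (by linarith) _
    rw [abs_of_nonneg (mul_nonneg (by linarith) h0)]
    nlinarith

lemma Dd_bound (s : ℝ) (hs : 1/2 < s) (hs1 : s ≤ 1) (t : ℝ) : |Dd s t| ≤ 8 := by
  rw [Dd]
  split_ifs with h
  · exact dphi_bound s hs hs1 h
  · rw [abs_neg]
    exact dphi_bound s hs hs1 (by linarith [not_le.mp h])

lemma uc_glue (f : ℝ → ℝ) (hc : Continuous f) (a b : ℝ)
    (hT : Tendsto f atTop (𝓝 a)) (hB : Tendsto f atBot (𝓝 b)) :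
    UniformContinuous f := by
  rw [Metric.uniformContinuous_iff]
  intro ε hε
  obtain ⟨R₁, hR₁⟩ := eventually_atTop.mp (Metric.tendsto_nhds.mp hT (ε/3) (by linarith))
  obtain ⟨R₂, hR₂⟩ := eventually_atBot.mp (Metric.tendsto_nhds.mp hB (ε/3) (by linarith))
  set R : ℝ := max |R₁| |R₂| + 1 with hR
  have hRR₁ : R₁ ≤ R := by
    have := le_abs_self R₁
    have := le_max_left |R₁| |R₂|
    linarith
  have hRR₂ : -R ≤ R₂ := by
    have := neg_abs_le R₂
    have := le_max_right |R₁| |R₂|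
    linarith
  set K : Set ℝ := Set.Icc (-(R+1)) (R+1) with hK
  have hKc : IsCompact K := isCompact_Icc
  have hUC := hKc.uniformContinuousOn_of_continuous hc.continuousOn
  obtain ⟨δ, hδ, hδ'⟩ := Metric.uniformContinuousOn_iff.mp hUC ε hε
  refine ⟨min δ 1, lt_min hδ one_pos, ?_⟩
  intro x y hxy
  have hxy1 : dist x y < 1 := lt_of_lt_of_le hxy (min_le_right _ _)
  have hxyδ : dist x y < δ := lt_of_lt_of_le hxy (min_le_left _ _)
  have htail : ∀ u v : ℝ, dist u v < 1 → u ∉ K → dist (f u) (f v) < ε := by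
    intro u v huv hu
    rw [hK, Set.mem_Icc, not_and_or] at hu
    rw [Real.dist_eq, abs_lt] at huv
    rcases hu with hu | hu
    · push_neg at hu
      have hu' : u < -(R+1) := by linarith
      have hvR : v ≤ R₂ := by linarith
      have huR : u ≤ R₂ := by linarith
      calc dist (f u) (f v) ≤ dist (f u) b + dist b (f v) := dist_triangle _ _ _
        _ < ε/3 + ε/3 := by
            rw [dist_comm b]
            exact add_lt_add (hR₂ u huR) (hR₂ v hvR)
        _ < ε := by linarith
    · push_neg at hu
      have hvR : R₁ ≤ v := by linarith
      have huR : R₁ ≤ u := by linarith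
      calc dist (f u) (f v) ≤ dist (f u) a + dist a (f v) := dist_triangle _ _ _
        _ < ε/3 + ε/3 := by
            rw [dist_comm a]
            exact add_lt_add (hR₁ u huR) (hR₁ v hvR)
        _ < ε := by linarith
  by_cases hx : x ∈ K
  · by_cases hy : y ∈ K
    · exact hδ' x hx y hy hxyδ
    · rw [dist_comm]
      exact htail y x (by rwa [dist_comm]) hy
  · exact htail x y hxy1 hx

lemma Dd_tendsto_top (s : ℝ) (hs : 1/2 < s) (hs1 : s ≤ 1) :
    ∃ a : ℝ, Tendsto (Dd s) atTop (𝓝 a) := by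
  have hev : ∀ᶠ t in atTop, Dd s t = s * t ^ (s-1) := by
    filter_upwards [eventually_gt_atTop 1] with t ht
    rw [Dd, if_pos (by linarith), dphi, if_neg (not_le.mpr ht), max_eq_left ht.le]
  rcases eq_or_lt_of_le hs1 with h1 | h1
  · refine ⟨1, ?_⟩
    apply Tendsto.congr' _ tendsto_const_nhds
    filter_upwards [hev, eventually_gt_atTop 0] with t ht ht0
    rw [ht, h1]
    simp [Real.rpow_zero]
  · refine ⟨0, ?_⟩
    have h := (tendsto_rpow_neg_atTop (by linarith : 0 < 1 - s)).const_mul s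
    rw [mul_zero] at h
    apply Tendsto.congr' _ h
    filter_upwards [hev] with t ht
    rw [ht]
    norm_num
  
lemma Dd_odd (s : ℝ) (hs : 1/2 < s) (t : ℝ) : Dd s (-t) = -Dd s t := by
  rcases lt_trichotomy t 0 with ht | ht | ht
  · rw [Dd, Dd, if_pos (by linarith), if_neg (not_le.mpr ht), neg_neg]
  · subst ht
    simp [Dd, dphi_zero s hs]
  · rw [Dd, Dd, if_neg (by simpa using ht), if_pos ht.le, neg_neg]

lemma Dd_uc (s : ℝ) (hs : 1/2 < s) (hs1 : s ≤ 1) : UniformContinuous (Dd s) := by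
  obtain ⟨a, hT⟩ := Dd_tendsto_top s hs hs1
  have hB : Tendsto (Dd s) atBot (𝓝 (-a)) := by
    have h1 : Tendsto (fun t => Dd s (-t)) atBot (𝓝 a) := hT.comp tendsto_neg_atBot_atTop
    have h2 := h1.neg
    have : (fun t => -Dd s (-t)) = Dd s := by
      funext t
      rw [Dd_odd s hs t, neg_neg]
    rwa [this] at h2
  exact uc_glue (Dd s) (Dd_cont s hs) a (-a) hT hB

theorem stmt_12 (s : ℝ) (hs : s ∈ Set.Ioc (1/2 : ℝ) 1) :
    ContDiff ℝ 1 (Fs s) ∧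
    (∃ M : ℝ, ∀ t : ℝ, |deriv (Fs s) t| ≤ M) ∧
    UniformContinuous (deriv (Fs s)) := by
  obtain ⟨hs1, hs2⟩ := hs
  have hD : deriv (Fs s) = Dd s := funext fun t => (hasDeriv_all s hs1 t).deriv
  refine ⟨?_, ⟨8, ?_⟩, ?_⟩
  · rw [contDiff_one_iff_deriv]
    exact ⟨fun t => (hasDeriv_all s hs1 t).differentiableAt, hD ▸ Dd_cont s hs1⟩
  · rw [hD]
    exact Dd_bound s hs1 hs2
  · rw [hD]
    exact Dd_uc s hs1 hs2
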